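/- For the prime 2 define T_{k}(n,r) = (k!·2^k / n!)·Σ_i (−1)^{2i+r} C(n, 2i+r) C(i,k) (a 2-adic rational which is in fact a 2-adic integer). Then for all k ≥ 1, n ≥ 1, and integers r: T_k(n,r) + r·T_{k−1}(n,r+2) = −T_{k−1}(n−1,r+1), where the sums defining T range over all i with 0 ≤ 2i+r ≤ n. -/

import Mathlib

/-- Binomial coefficient `C(n,m)` with integer lower index, zero when `m < 0`. -/
def chooseInt (n : ℕ) (m : ℤ) : ℚ := if m < 0 then 0 else (n.choose m.toNat : ℚ)

/-- `T_k(n,r) = T^2_{k,1}(n,r) = (k!·2^k/n!)·∑_i (-1)^{2i+r} C(n,2i+r) C(i,k)`. -/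
def T (k n : ℕ) (r : ℤ) : ℚ :=
  ((k.factorial : ℚ) * 2 ^ k / (n.factorial : ℚ)) *
    ∑ i ∈ Finset.range (n + 1 + r.natAbs),
      (-1 : ℚ) ^ (2 * (i : ℤ) + r) * chooseInt n (2 * (i : ℤ) + r) * (i.choose k : ℚ)

lemma chooseInt_eq_zero {n : ℕ} {m : ℤ} (h : (n:ℤ) < m) : chooseInt n m = 0 := by
  unfold chooseInt
  rw [if_neg (by omega), Nat.choose_eq_zero_of_lt (by omega)]
  simp

lemma mul_chooseInt {n : ℕ} (hn : 1 ≤ n) (m : ℤ) :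
    (n:ℚ) * chooseInt (n-1) (m-1) = (m:ℚ) * chooseInt n m := by
  unfold chooseInt
  rcases lt_trichotomy m 0 with h|h|h
  · rw [if_pos (by omega), if_pos h]; ring
  · subst h; norm_num
  · rw [if_neg (by omega), if_neg (by omega)]
    have key : n * (n-1).choose ((m-1).toNat) = n.choose m.toNat * m.toNat := by
      have h2 := Nat.add_one_mul_choose_eq (n-1) ((m-1).toNat)
      have e1 : n - 1 + 1 = n := by omega
      have e2 : (m-1).toNat + 1 = m.toNat := by omega
      rw [e1, e2] at h2
      rw [h2]
    have hm : ((m.toNat : ℕ) : ℚ) = (m:ℚ) := by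
      rw [← Int.cast_natCast]
      rw [Int.toNat_of_nonneg (le_of_lt h)]
    calc (n:ℚ) * ((n-1).choose ((m-1).toNat) : ℚ)
        = ((n * (n-1).choose ((m-1).toNat) : ℕ) : ℚ) := by push_cast; ring
      _ = ((n.choose m.toNat * m.toNat : ℕ) : ℚ) := by rw [key]
      _ = (m:ℚ) * (n.choose m.toNat : ℚ) := by push_cast [hm]; ring

lemma choose_mul {k : ℕ} (hk : 1 ≤ k) (i : ℕ) :
    (k:ℚ) * (i.choose k : ℚ) = (i:ℚ) * ((i-1).choose (k-1) : ℚ) := by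
  have key : k * i.choose k = i * ((i-1).choose (k-1)) := by
    rcases Nat.eq_zero_or_pos i with h|h
    · subst h; simp [Nat.choose_eq_zero_of_lt hk]
    · have h2 := Nat.add_one_mul_choose_eq (i-1) (k-1)
      have e1 : i - 1 + 1 = i := by omega
      have e2 : (k-1) + 1 = k := by omega
      rw [e1, e2] at h2
      rw [h2]; ring
  exact_mod_cast key

lemma core (k n N : ℕ) (r : ℤ) (hk : 1 ≤ k) (hn : 1 ≤ n) (hN : 1 ≤ N)
    (hbig : (n:ℤ) < 2*N + r) :
    2*(k:ℚ) * ∑ i ∈ Finset.range N, chooseInt n (2*(i:ℤ)+r) * (i.choose k : ℚ)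
      + (r:ℚ) * ∑ i ∈ Finset.range N, chooseInt n (2*(i:ℤ)+r+2) * (i.choose (k-1) : ℚ)
      = (n:ℚ) * ∑ i ∈ Finset.range N, chooseInt (n-1) (2*(i:ℤ)+r+1) * (i.choose (k-1) : ℚ) := by
  have hR : (n:ℚ) * ∑ i ∈ Finset.range N, chooseInt (n-1) (2*(i:ℤ)+r+1) * (i.choose (k-1) : ℚ)
      = ∑ i ∈ Finset.range N,
          ((2*(i:ℚ)+(r:ℚ)+2) * chooseInt n (2*(i:ℤ)+r+2) * (i.choose (k-1) : ℚ)) := by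
    rw [Finset.mul_sum]
    refine Finset.sum_congr rfl fun i _ => ?_
    have h := mul_chooseInt hn (2*(i:ℤ)+r+2)
    rw [show 2*(i:ℤ)+r+2-1 = 2*(i:ℤ)+r+1 by ring] at h
    push_cast at h
    linear_combination (i.choose (k-1) : ℚ) * h
  rw [hR]
  have hsplit : ∑ i ∈ Finset.range N,
          ((2*(i:ℚ)+(r:ℚ)+2) * chooseInt n (2*(i:ℤ)+r+2) * (i.choose (k-1) : ℚ))
      = (∑ i ∈ Finset.range N,
          ((2*(i:ℚ)+2) * chooseInt n (2*(i:ℤ)+r+2) * (i.choose (k-1) : ℚ)))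
        + (r:ℚ) * ∑ i ∈ Finset.range N, chooseInt n (2*(i:ℤ)+r+2) * (i.choose (k-1) : ℚ) := by
    rw [Finset.mul_sum, ← Finset.sum_add_distrib]
    exact Finset.sum_congr rfl fun i _ => by ring
  rw [hsplit]
  have hL : 2*(k:ℚ) * ∑ i ∈ Finset.range N, chooseInt n (2*(i:ℤ)+r) * (i.choose k : ℚ)
      = ∑ i ∈ Finset.range N,
          (2*(i:ℚ) * chooseInt n (2*(i:ℤ)+r) * ((i-1).choose (k-1) : ℚ)) := by
    rw [Finset.mul_sum]
    refine Finset.sum_congr rfl fun i _ => ?_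
    have h := choose_mul hk i
    linear_combination 2 * chooseInt n (2*(i:ℤ)+r) * h
  rw [hL]
  obtain ⟨M, rfl⟩ : ∃ M, N = M + 1 := ⟨N - 1, by omega⟩
  rw [Finset.sum_range_succ' (fun i => (2*(i:ℚ) * chooseInt n (2*(i:ℤ)+r) * ((i-1).choose (k-1) : ℚ))) M]
  rw [Finset.sum_range_succ (fun i => ((2*(i:ℚ)+2) * chooseInt n (2*(i:ℤ)+r+2) * (i.choose (k-1) : ℚ))) M]
  have hzero : chooseInt n (2*(M:ℤ)+r+2) = 0 := chooseInt_eq_zero (by push_cast at hbig ⊢; omega)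
  rw [hzero]
  simp only [Nat.cast_zero, mul_zero, zero_mul, add_zero]
  refine congrArg₂ (· + ·) (Finset.sum_congr rfl fun i _ => ?_) ?_
  · have e : 2*((i:ℤ)+1)+r = 2*(i:ℤ)+r+2 := by ring
    have e2 : (i + 1) - 1 = i := by omega
    push_cast
    rw [e]
    ring
  · norm_num

theorem stmt17 (k n : ℕ) (r : ℤ) (hk : 1 ≤ k) (hn : 1 ≤ n) :
    T k n r + (r : ℚ) * T (k - 1) n (r + 2) = -T (k - 1) (n - 1) (r + 1) := by
  obtain ⟨k, rfl⟩ : ∃ k', k = k' + 1 := ⟨k-1, by omega⟩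
  obtain ⟨n, rfl⟩ : ∃ n', n = n' + 1 := ⟨n-1, by omega⟩
  simp only [Nat.add_sub_cancel]
  set N := (n+1) + 1 + r.natAbs + (r+1).natAbs + (r+2).natAbs with hNdef
  have hsign : ∀ (s : ℤ) (i : ℕ), ((-1:ℚ))^(2*(i:ℤ)+s) = (-1:ℚ)^s := fun s i => by
    rw [zpow_add₀ (by norm_num : (-1:ℚ) ≠ 0), Even.neg_one_zpow ⟨(i:ℤ), by ring⟩, one_mul]
  have hs2 : ((-1:ℚ))^(r+2) = (-1:ℚ)^r := by
    rw [zpow_add₀ (by norm_num : (-1:ℚ) ≠ 0)]; norm_num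
  have hs3 : ((-1:ℚ))^(r+1) = (-1:ℚ)^r * (-1) := by
    rw [zpow_add₀ (by norm_num : (-1:ℚ) ≠ 0)]; norm_num
  unfold T
  have e1 : ∑ i ∈ Finset.range ((n+1) + 1 + r.natAbs),
        (-1:ℚ)^(2*(i:ℤ)+r) * chooseInt (n+1) (2*(i:ℤ)+r) * (i.choose (k+1) : ℚ)
      = (-1:ℚ)^r * ∑ i ∈ Finset.range N, chooseInt (n+1) (2*(i:ℤ)+r) * (i.choose (k+1) : ℚ) := by
    rw [Finset.sum_subset (Finset.range_subset_range.mpr (show (n+1)+1+r.natAbs ≤ N by omega))]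
    · rw [Finset.mul_sum]
      exact Finset.sum_congr rfl fun i _ => by rw [hsign]; ring
    · intro i hi hi2
      simp only [Finset.mem_range] at hi hi2
      rw [chooseInt_eq_zero (show ((n+1:ℕ):ℤ) < 2*(i:ℤ)+r by push_cast; omega)]
      ring
  have e2 : ∑ i ∈ Finset.range ((n+1) + 1 + (r+2).natAbs),
        (-1:ℚ)^(2*(i:ℤ)+(r+2)) * chooseInt (n+1) (2*(i:ℤ)+(r+2)) * (i.choose k : ℚ)
      = (-1:ℚ)^r * ∑ i ∈ Finset.range N, chooseInt (n+1) (2*(i:ℤ)+r+2) * (i.choose k : ℚ) := by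
    rw [Finset.sum_subset (Finset.range_subset_range.mpr (show (n+1)+1+(r+2).natAbs ≤ N by omega))]
    · rw [Finset.mul_sum]
      refine Finset.sum_congr rfl fun i _ => ?_
      rw [hsign, hs2, show 2*(i:ℤ)+(r+2) = 2*(i:ℤ)+r+2 by ring]
      ring
    · intro i hi hi2
      simp only [Finset.mem_range] at hi hi2
      rw [chooseInt_eq_zero (show ((n+1:ℕ):ℤ) < 2*(i:ℤ)+(r+2) by push_cast; omega)]
      ring
  have e3 : ∑ i ∈ Finset.range (n + 1 + (r+1).natAbs),
        (-1:ℚ)^(2*(i:ℤ)+(r+1)) * chooseInt n (2*(i:ℤ)+(r+1)) * (i.choose k : ℚ)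
      = ((-1:ℚ)^r * (-1)) * ∑ i ∈ Finset.range N, chooseInt n (2*(i:ℤ)+r+1) * (i.choose k : ℚ) := by
    rw [Finset.sum_subset (Finset.range_subset_range.mpr (show n+1+(r+1).natAbs ≤ N by omega))]
    · rw [Finset.mul_sum]
      refine Finset.sum_congr rfl fun i _ => ?_
      rw [hsign, hs3, show 2*(i:ℤ)+(r+1) = 2*(i:ℤ)+r+1 by ring]
      ring
    · intro i hi hi2
      simp only [Finset.mem_range] at hi hi2
      rw [chooseInt_eq_zero (show ((n:ℕ):ℤ) < 2*(i:ℤ)+(r+1) by omega)]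
      ring
  have hcore := core (k+1) (n+1) N r (by omega) (by omega) (by omega)
      (by omega)
  simp only [Nat.add_sub_cancel] at hcore
  rw [e1, e2, e3]
  have hfacn : (((n+1).factorial : ℕ) : ℚ) = ((n:ℚ)+1) * (n.factorial : ℚ) := by
    rw [Nat.factorial_succ]; push_cast; ring
  have hfack : (((k+1).factorial : ℕ) : ℚ) = ((k:ℚ)+1) * (k.factorial : ℚ) := by
    rw [Nat.factorial_succ]; push_cast; ring
  have hnen : (n.factorial : ℚ) ≠ 0 := Nat.cast_ne_zero.mpr (Nat.factorial_ne_zero n)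
  have hne1 : ((n:ℚ)+1) ≠ 0 := by positivity
  rw [hfacn, hfack]
  push_cast at hcore
  rw [show (k.factorial:ℚ) * 2 ^ k / (n.factorial:ℚ)
      = (((n:ℚ)+1) * ((k.factorial:ℚ) * 2 ^ k)) / (((n:ℚ)+1) * (n.factorial:ℚ)) from
      (mul_div_mul_left _ _ hne1).symm]
  linear_combination ((-1:ℚ)^r * (k.factorial:ℚ) * 2^k / (((n:ℚ)+1) * (n.factorial:ℚ))) * hcore
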